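/- Let F be a finitely generated free group and let φ : F → F be a group endomorphism. Then there exists a positive integer k such that ker(φ^k) = ker(φ^n) for every n ≥ k; that is, the increasing sequence of subgroups ker φ ⊆ ker φ² ⊆ ker φ³ ⊆ ⋯ stabilizes. -/

import Mathlib

namespace KStab

open FreeGroup List

variable {ι : Type*} [DecidableEq ι]

noncomputable section
variable (L : List (ι × Bool))

/-- input position for the `i`-th letter -/
def inp (i : Fin L.length) : Fin (L.length + 1) :=
  if (L.get i).2 then ⟨L.length - 1 - i, by have := i.isLt; omega⟩
  else ⟨L.length - i, by have := i.isLt; omega⟩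

/-- output position for the `i`-th letter -/
def out (i : Fin L.length) : Fin (L.length + 1) :=
  if (L.get i).2 then ⟨L.length - i, by have := i.isLt; omega⟩
  else ⟨L.length - 1 - i, by have := i.isLt; omega⟩

def pairs (a : ι) : List (Fin (L.length + 1) × Fin (L.length + 1)) :=
  (List.finRange L.length).filterMap fun i =>
    if (L.get i).1 = a then some (inp L i, out L i) else none

lemma mem_pairs {a : ι} {q : Fin (L.length + 1) × Fin (L.length + 1)} :
    q ∈ pairs L a ↔ ∃ i : Fin L.length, (L.get i).1 = a ∧ q = (inp L i, out L i) := by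
  simp only [pairs, List.mem_filterMap, List.mem_finRange, true_and,
    Option.ite_none_right_eq_some, Option.some.injEq]
  tauto

lemma no_cancel (hred : reduce L = L) (i : ℕ) (h1 : i + 1 < L.length)
    (h : (L.get ⟨i + 1, h1⟩).1 = (L.get ⟨i, by omega⟩).1)
    (hb : (L.get ⟨i + 1, h1⟩).2 = !(L.get ⟨i, by omega⟩).2) : False := by
  have hi : i < L.length := by omega
  have hL : L = L.take i ++ ((L.get ⟨i, hi⟩).1, (L.get ⟨i, hi⟩).2) ::
      ((L.get ⟨i, hi⟩).1, !(L.get ⟨i, hi⟩).2) :: L.drop (i + 2) := by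
    conv_lhs => rw [← List.take_append_drop i L]
    congr 1
    rw [List.drop_eq_getElem_cons hi, List.drop_eq_getElem_cons h1]
    simp only [List.get_eq_getElem] at h hb ⊢
    refine List.cons_eq_cons.mpr ⟨Prod.mk.eta.symm, List.cons_eq_cons.mpr ⟨Prod.ext h hb, by norm_num⟩⟩
  exact reduce.not (hred.trans hL)

lemma inp_inj (hred : reduce L = L) {a : ι} {i j : Fin L.length}
    (hi : (L.get i).1 = a) (hj : (L.get j).1 = a) (h : inp L i = inp L j) : i = j := by
  have hi' := i.isLt; have hj' := j.isLt
  unfold inp at h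
  by_cases bi : (L.get i).2 <;> by_cases bj : (L.get j).2 <;>
    simp only [bi, bj, if_true, if_false, Bool.false_eq_true, Fin.mk.injEq] at h
  · exact Fin.ext (by omega)
  · -- (L.get i).2 = true, (L.get j).2 = false, L.length-1-i = L.length-j ⇒ j = i+1
    exfalso
    have hij : (j : ℕ) = (i : ℕ) + 1 := by omega
    refine no_cancel L hred i (by omega) ?_ ?_
    · show (L.get ⟨(i : ℕ)+1, _⟩).1 = (L.get ⟨(i : ℕ), _⟩).1
      rw [show (⟨(i : ℕ)+1, by omega⟩ : Fin L.length) = j from Fin.ext hij.symm,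
        show (⟨(i : ℕ), by omega⟩ : Fin L.length) = i from rfl, hi, hj]
    · show (L.get ⟨(i : ℕ)+1, _⟩).2 = !(L.get ⟨(i : ℕ), _⟩).2
      rw [show (⟨(i : ℕ)+1, by omega⟩ : Fin L.length) = j from Fin.ext hij.symm,
        show (⟨(i : ℕ), by omega⟩ : Fin L.length) = i from rfl]
      simp only [List.get_eq_getElem, Bool.not_eq_true] at bi bj
      simp [bi, bj]
  · exfalso
    have hij : (i : ℕ) = (j : ℕ) + 1 := by omega
    refine no_cancel L hred j (by omega) ?_ ?_
    · show (L.get ⟨(j : ℕ)+1, _⟩).1 = (L.get ⟨(j : ℕ), _⟩).1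
      rw [show (⟨(j : ℕ)+1, by omega⟩ : Fin L.length) = i from Fin.ext hij.symm,
        show (⟨(j : ℕ), by omega⟩ : Fin L.length) = j from rfl, hi, hj]
    · show (L.get ⟨(j : ℕ)+1, _⟩).2 = !(L.get ⟨(j : ℕ), _⟩).2
      rw [show (⟨(j : ℕ)+1, by omega⟩ : Fin L.length) = i from Fin.ext hij.symm,
        show (⟨(j : ℕ), by omega⟩ : Fin L.length) = j from rfl]
      simp only [List.get_eq_getElem, Bool.not_eq_true] at bi bj
      simp [bi, bj]
  · exact Fin.ext (by omega)

lemma out_inj (hred : reduce L = L) {a : ι} {i j : Fin L.length}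
    (hi : (L.get i).1 = a) (hj : (L.get j).1 = a) (h : out L i = out L j) : i = j := by
  have hi' := i.isLt; have hj' := j.isLt
  unfold out at h
  by_cases bi : (L.get i).2 <;> by_cases bj : (L.get j).2 <;>
    simp only [bi, bj, if_true, if_false, Bool.false_eq_true, Fin.mk.injEq] at h
  · exact Fin.ext (by omega)
  · -- out i = L.length - i, out j = L.length-1-j ⇒ i = j+1
    exfalso
    have hij : (i : ℕ) = (j : ℕ) + 1 := by omega
    refine no_cancel L hred j (by omega) ?_ ?_
    · show (L.get ⟨(j : ℕ)+1, _⟩).1 = (L.get ⟨(j : ℕ), _⟩).1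
      rw [show (⟨(j : ℕ)+1, by omega⟩ : Fin L.length) = i from Fin.ext hij.symm,
        show (⟨(j : ℕ), by omega⟩ : Fin L.length) = j from rfl, hi, hj]
    · show (L.get ⟨(j : ℕ)+1, _⟩).2 = !(L.get ⟨(j : ℕ), _⟩).2
      rw [show (⟨(j : ℕ)+1, by omega⟩ : Fin L.length) = i from Fin.ext hij.symm,
        show (⟨(j : ℕ), by omega⟩ : Fin L.length) = j from rfl]
      simp only [List.get_eq_getElem, Bool.not_eq_true] at bi bj
      simp [bi, bj]
  · exfalso
    have hij : (j : ℕ) = (i : ℕ) + 1 := by omega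
    refine no_cancel L hred i (by omega) ?_ ?_
    · show (L.get ⟨(i : ℕ)+1, _⟩).1 = (L.get ⟨(i : ℕ), _⟩).1
      rw [show (⟨(i : ℕ)+1, by omega⟩ : Fin L.length) = j from Fin.ext hij.symm,
        show (⟨(i : ℕ), by omega⟩ : Fin L.length) = i from rfl, hi, hj]
    · show (L.get ⟨(i : ℕ)+1, _⟩).2 = !(L.get ⟨(i : ℕ), _⟩).2
      rw [show (⟨(i : ℕ)+1, by omega⟩ : Fin L.length) = j from Fin.ext hij.symm,
        show (⟨(i : ℕ), by omega⟩ : Fin L.length) = i from rfl]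
      simp only [List.get_eq_getElem, Bool.not_eq_true] at bi bj
      simp [bi, bj]
  · exact Fin.ext (by omega)

lemma pairs_fst_inj (hred : reduce L = L) {a : ι} {q q'}
    (hq : q ∈ pairs L a) (hq' : q' ∈ pairs L a) (h : q.1 = q'.1) : q = q' := by
  obtain ⟨i, hi, rfl⟩ := (mem_pairs L).1 hq
  obtain ⟨j, hj, rfl⟩ := (mem_pairs L).1 hq'
  cases inp_inj L hred hi hj h; rfl

lemma pairs_snd_inj (hred : reduce L = L) {a : ι} {q q'}
    (hq : q ∈ pairs L a) (hq' : q' ∈ pairs L a) (h : q.2 = q'.2) : q = q' := by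
  obtain ⟨i, hi, rfl⟩ := (mem_pairs L).1 hq
  obtain ⟨j, hj, rfl⟩ := (mem_pairs L).1 hq'
  cases out_inj L hred hi hj h; rfl

def eFun (hred : reduce L = L) (a : ι) :
    {x // x ∈ (pairs L a).map Prod.fst} → {y // y ∈ (pairs L a).map Prod.snd} := fun x =>
  let h := List.mem_map.1 x.2
  ⟨h.choose.2, List.mem_map_of_mem (f := Prod.snd) h.choose_spec.1⟩

lemma eFun_spec (hred : reduce L = L) (a : ι) (x) {q} (hq : q ∈ pairs L a) (hqx : q.1 = x.1) :
    (eFun L hred a x : Fin (L.length + 1)) = q.2 := by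
  have h := List.mem_map.1 x.2
  have := h.choose_spec
  have : h.choose = q := pairs_fst_inj L hred this.1 hq (this.2.trans hqx.symm)
  simp only [eFun, this]

lemma eFun_bij (hred : reduce L = L) (a : ι) : Function.Bijective (eFun L hred a) := by
  constructor
  · rintro x x' hxx
    have h := List.mem_map.1 x.2
    have h' := List.mem_map.1 x'.2
    have hs := h.choose_spec
    have hs' := h'.choose_spec
    have : (eFun L hred a x : Fin (L.length + 1)) = (eFun L hred a x' : Fin (L.length + 1)) := by
      rw [hxx]
    simp only [eFun] at this
    have hq : h.choose = h'.choose := pairs_snd_inj L hred hs.1 hs'.1 this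
    exact Subtype.ext (hs.2.symm.trans (hq ▸ hs'.2))
  · rintro ⟨y, hy⟩
    obtain ⟨q, hq, rfl⟩ := List.mem_map.1 hy
    refine ⟨⟨q.1, List.mem_map_of_mem (f := Prod.fst) hq⟩, ?_⟩
    exact Subtype.ext (eFun_spec L hred a _ hq rfl)

def sigma (hred : reduce L = L) (a : ι) : Equiv.Perm (Fin (L.length + 1)) :=
  Equiv.extendSubtype (Equiv.ofBijective _ (eFun_bij L hred a))

lemma sigma_spec (hred : reduce L = L) (a : ι) {q} (hq : q ∈ pairs L a) :
    sigma L hred a q.1 = q.2 := by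
  rw [sigma, Equiv.extendSubtype_apply_of_mem _ q.1 (List.mem_map_of_mem (f := Prod.fst) hq)]
  exact eFun_spec L hred a _ hq rfl

lemma sigma_step (hred : reduce L = L) (i : Fin L.length) :
    sigma L hred (L.get i).1 (inp L i) = out L i :=
  sigma_spec L hred _ ((mem_pairs L).2 ⟨i, rfl, rfl⟩)

lemma eval (hred : reduce L = L) :
    ∀ m, ∀ _hm : m ≤ L.length,
      (((L.drop (L.length - m)).map
          fun x => cond x.2 (sigma L hred x.1) (sigma L hred x.1)⁻¹).prod)
        ⟨0, by omega⟩ = ⟨m, by omega⟩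
  | 0, hm => by simp [List.drop_length]
  | (m+1), hm => by
    have hi : L.length - (m+1) < L.length := by omega
    rw [List.drop_eq_getElem_cons hi, List.map_cons, List.prod_cons, Equiv.Perm.mul_apply,
      show L.length - (m+1) + 1 = L.length - m by omega, eval hred m (by omega)]
    have e1t : (L.get ⟨L.length - (m+1), hi⟩).2 = true →
        inp L ⟨L.length - (m+1), hi⟩ = ⟨m, by omega⟩ := by
      intro b; unfold inp; rw [if_pos b]; exact Fin.ext (by simp; omega)
    have e2t : (L.get ⟨L.length - (m+1), hi⟩).2 = true →
        out L ⟨L.length - (m+1), hi⟩ = ⟨m + 1, by omega⟩ := by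
      intro b; unfold out; rw [if_pos b]; exact Fin.ext (by simp; omega)
    have e1f : (L.get ⟨L.length - (m+1), hi⟩).2 = false →
        inp L ⟨L.length - (m+1), hi⟩ = ⟨m + 1, by omega⟩ := by
      intro b; unfold inp; rw [if_neg (by rw [b]; simp)]; exact Fin.ext (by simp; omega)
    have e2f : (L.get ⟨L.length - (m+1), hi⟩).2 = false →
        out L ⟨L.length - (m+1), hi⟩ = ⟨m, by omega⟩ := by
      intro b; unfold out; rw [if_neg (by rw [b]; simp)]; exact Fin.ext (by simp; omega)
    have hstep := sigma_step L hred ⟨L.length - (m+1), hi⟩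
    by_cases b : (L.get ⟨L.length - (m+1), hi⟩).2
    · rw [e1t b, e2t b] at hstep
      have hb : L[L.length - (m+1)].2 = true := b
      rw [hb]
      exact hstep
    · have b' : (L.get ⟨L.length - (m+1), hi⟩).2 = false := by simpa using b
      rw [e1f b', e2f b'] at hstep
      have hb : L[L.length - (m+1)].2 = false := b'
      rw [hb]
      show (sigma L hred L[L.length - (m+1)].1)⁻¹ ⟨m, by omega⟩ = ⟨m + 1, by omega⟩
      rw [Equiv.Perm.inv_eq_iff_eq]
      exact hstep.symm

end

theorem exists_finite_quotient {ι : Type*} (w : FreeGroup ι) (hw : w ≠ 1) :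
    ∃ (Q : Type) (_ : Group Q) (_ : Finite Q) (ψ : FreeGroup ι →* Q), ψ w ≠ 1 := by
  classical
  have hred : reduce w.toWord = w.toWord := reduce_toWord w
  have hlen : w.toWord ≠ [] := fun h => hw (toWord_eq_nil_iff.1 h)
  have hn : 0 < w.toWord.length := List.length_pos_iff.2 hlen
  refine ⟨Equiv.Perm (Fin (w.toWord.length + 1)), inferInstance, inferInstance,
    FreeGroup.lift (sigma w.toWord hred), fun hψ => ?_⟩
  have h0 := eval w.toWord hred w.toWord.length le_rfl
  rw [Nat.sub_self, List.drop_zero] at h0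
  have hψ' : FreeGroup.lift (sigma w.toWord hred) (FreeGroup.mk w.toWord) = 1 := by
    rw [FreeGroup.mk_toWord]; exact hψ
  have hw' : FreeGroup.lift (sigma w.toWord hred) (FreeGroup.mk w.toWord)
      = (w.toWord.map
          fun x => cond x.2 (sigma w.toWord hred x.1) (sigma w.toWord hred x.1)⁻¹).prod :=
    FreeGroup.lift_mk
  have h2 := DFunLike.congr_fun (hw'.symm.trans hψ') (⟨0, by omega⟩ : Fin (w.toWord.length + 1))
  rw [h0] at h2
  have h3 : w.toWord.length = 0 := congrArg Fin.val h2
  omega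

open Cardinal in
lemma card_le_of_closure {ι : Type*} (S : Finset (FreeGroup ι))
    (hS : Subgroup.closure (S : Set (FreeGroup ι)) = ⊤) : #ι ≤ (S.card : Cardinal) := by
  classical
  set β : FreeGroup ι →* Multiplicative (ι →₀ ℚ) :=
    FreeGroup.lift (fun i => Multiplicative.ofAdd (Finsupp.single i 1)) with hβ
  set T : Set (ι →₀ ℚ) := (fun g => Multiplicative.toAdd (β g)) '' (S : Set (FreeGroup ι)) with hT
  have hTspan : ∀ x ∈ Subgroup.closure ((S : Set (FreeGroup ι))),
      Multiplicative.toAdd (β x) ∈ Submodule.span ℚ T := by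
    intro x hx
    induction hx using Subgroup.closure_induction with
    | mem y hy => exact Submodule.subset_span ⟨y, hy, rfl⟩
    | one => simpa using Submodule.zero_mem _
    | mul y z _ _ hy hz => simpa using Submodule.add_mem _ hy hz
    | inv y _ hy => simpa using Submodule.neg_mem _ hy
  have hsingle : ∀ i : ι, (Finsupp.single i (1 : ℚ)) ∈ Submodule.span ℚ T := by
    intro i
    have h1 : FreeGroup.of i ∈ Subgroup.closure ((S : Set (FreeGroup ι))) := by
      rw [hS]; trivial
    have := hTspan _ h1
    simpa [hβ] using this
  have hspan : Submodule.span ℚ T = ⊤ := by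
    rw [eq_top_iff, ← (Finsupp.basisSingleOne (R := ℚ) (ι := ι)).span_eq]
    refine Submodule.span_le.2 ?_
    rintro _ ⟨i, rfl⟩
    simpa using hsingle i
  calc #ι = Module.rank ℚ (ι →₀ ℚ) := by
        rw [rank_finsupp_self, Cardinal.lift_uzero]
    _ = Module.rank ℚ (⊤ : Submodule ℚ (ι →₀ ℚ)) := (rank_top ℚ _).symm
    _ = Module.rank ℚ (Submodule.span ℚ T) := by rw [hspan]
    _ ≤ #T := rank_span_le T
    _ ≤ #(S : Set (FreeGroup ι)) := Cardinal.mk_image_le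
    _ = (S.card : Cardinal) := Cardinal.mk_coe_finset

lemma finite_of_fg_freeGroup {ι : Type*} [Group.FG (FreeGroup ι)] : Finite ι := by
  obtain ⟨S, -, hS⟩ := Group.rank_spec (FreeGroup ι)
  have := card_le_of_closure S hS
  rw [← Cardinal.lt_aleph0_iff_finite]
  exact this.trans_lt (Cardinal.nat_lt_aleph0 _)

lemma rank_freeGroup {ι : Type*} [Finite ι] [Group.FG (FreeGroup ι)] :
    Group.rank (FreeGroup ι) = Nat.card ι := by
  classical
  cases nonempty_fintype ι
  refine le_antisymm ?_ ?_
  · have hS : Subgroup.closure ((Finset.univ.image (FreeGroup.of (α := ι)) : Finset _) :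
        Set (FreeGroup ι)) = ⊤ := by
      rw [Finset.coe_image, Finset.coe_univ, Set.image_univ]
      exact FreeGroup.closure_range_of ι
    refine (Group.rank_le hS).trans ?_
    calc (Finset.univ.image (FreeGroup.of (α := ι))).card ≤ Finset.univ.card :=
          Finset.card_image_le
      _ = Nat.card ι := by rw [Finset.card_univ, Nat.card_eq_fintype_card]
  · obtain ⟨S, hScard, hS⟩ := Group.rank_spec (FreeGroup ι)
    have h := card_le_of_closure S hS
    have := Cardinal.toNat_le_toNat h (Cardinal.nat_lt_aleph0 _)
    simpa [Nat.card, hScard] using this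

lemma hopf {ι : Type*} [Finite ι] (g : FreeGroup ι →* FreeGroup ι)
    (hg : Function.Surjective g) : Function.Injective g := by
  rw [injective_iff_map_eq_one]
  intro w hw
  by_contra hw1
  obtain ⟨Q, _, _, ψ, hψ⟩ := exists_finite_quotient w hw1
  have : Finite (FreeGroup ι →* Q) := Finite.of_equiv _ (FreeGroup.lift (β := Q))
  have hT : Function.Injective (fun χ : FreeGroup ι →* Q => χ.comp g) := by
    intro χ₁ χ₂ h
    exact (MonoidHom.cancel_right hg).1 h
  obtain ⟨χ, hχ⟩ := (Finite.injective_iff_surjective.1 hT) ψ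
  have : ψ w = χ (g w) := by rw [← hχ]; rfl
  rw [hw] at this
  exact hψ (this.trans (map_one χ))

lemma surj_inj {A B : Type*} [Group A] [Group B] [IsFreeGroup A] [IsFreeGroup B]
    [Group.FG A] [Group.FG B] (f : A →* B) (hf : Function.Surjective f)
    (hr : Group.rank A = Group.rank B) : Function.Injective f := by
  classical
  set uA : A ≃* FreeGroup (IsFreeGroup.Generators A) := IsFreeGroup.toFreeGroup A with huA
  set uB : B ≃* FreeGroup (IsFreeGroup.Generators B) := IsFreeGroup.toFreeGroup B with huB
  have hFA : Group.FG (FreeGroup (IsFreeGroup.Generators A)) :=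
    Group.fg_of_surjective (f := uA.toMonoidHom) uA.surjective
  have hFB : Group.FG (FreeGroup (IsFreeGroup.Generators B)) :=
    Group.fg_of_surjective (f := uB.toMonoidHom) uB.surjective
  have hfinA : Finite (IsFreeGroup.Generators A) := finite_of_fg_freeGroup
  have hfinB : Finite (IsFreeGroup.Generators B) := finite_of_fg_freeGroup
  have hcard : Nat.card (IsFreeGroup.Generators B) = Nat.card (IsFreeGroup.Generators A) := by
    have h1 : Group.rank A = Nat.card (IsFreeGroup.Generators A) :=
      (Group.rank_congr uA).trans rank_freeGroup
    have h2 : Group.rank B = Nat.card (IsFreeGroup.Generators B) :=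
      (Group.rank_congr uB).trans rank_freeGroup
    omega
  have e : IsFreeGroup.Generators B ≃ IsFreeGroup.Generators A := by
    letI := Fintype.ofFinite (IsFreeGroup.Generators A)
    letI := Fintype.ofFinite (IsFreeGroup.Generators B)
    exact Fintype.equivOfCardEq (by rwa [← Nat.card_eq_fintype_card, ← Nat.card_eq_fintype_card])
  set vB : B ≃* FreeGroup (IsFreeGroup.Generators A) := uB.trans (FreeGroup.freeGroupCongr e)
    with hvB
  set g : FreeGroup (IsFreeGroup.Generators A) →* FreeGroup (IsFreeGroup.Generators A) :=
    vB.toMonoidHom.comp (f.comp uA.symm.toMonoidHom) with hg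
  have hgsurj : Function.Surjective g :=
    vB.surjective.comp (hf.comp uA.symm.surjective)
  have hginj : Function.Injective g := hopf g hgsurj
  intro x y hxy
  have : g (uA x) = g (uA y) := by
    simp only [hg, MonoidHom.comp_apply, MulEquiv.coe_toMonoidHom, MulEquiv.symm_apply_apply, hxy]
  have := hginj this
  simpa using congrArg uA.symm this

end KStab

/-- The `n`-fold composition of an endomorphism `φ` with itself. -/
def iterateHom {G : Type*} [Group G] (φ : G →* G) : ℕ → (G →* G)
  | 0 => MonoidHom.id G
  | n + 1 => φ.comp (iterateHom φ n)

lemma iterateHom_add {G : Type*} [Group G] (φ : G →* G) (a b : ℕ) :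
    iterateHom φ (a + b) = (iterateHom φ a).comp (iterateHom φ b) := by
  induction a with
  | zero => rw [Nat.zero_add]; exact (MonoidHom.id_comp _).symm
  | succ a ih =>
    rw [show a + 1 + b = (a + b) + 1 by omega]
    show φ.comp (iterateHom φ (a + b)) = _
    rw [ih]
    rfl

theorem kernels_stabilize
    {F : Type*} [Group F] [IsFreeGroup F] [Group.FG F] (φ : F →* F) :
    ∃ k : ℕ, 0 < k ∧ ∀ n : ℕ, k ≤ n → (iterateHom φ n).ker = (iterateHom φ k).ker := by
  classical
  set r : ℕ → ℕ := fun n => Group.rank ((iterateHom φ n).range) with hr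
  have hmem : ∀ n (x : ↥(iterateHom φ n).range), φ (x : F) ∈ (iterateHom φ (n + 1)).range := by
    rintro n ⟨x, z, rfl⟩
    exact ⟨z, rfl⟩
  let q : ∀ n, ↥(iterateHom φ n).range →* ↥(iterateHom φ (n + 1)).range := fun n =>
    MonoidHom.codRestrict (φ.comp (iterateHom φ n).range.subtype) _ (hmem n)
  have hqsurj : ∀ n, Function.Surjective (q n) := by
    rintro n ⟨y, z, rfl⟩
    exact ⟨⟨iterateHom φ n z, z, rfl⟩, rfl⟩
  have hmono : ∀ n, r (n + 1) ≤ r n := fun n => Group.rank_le_of_surjective (q n) (hqsurj n)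
  obtain ⟨k0, hk0⟩ : ∃ k0, ∀ n, r k0 ≤ r n := by
    have hne : (Set.range r).Nonempty := ⟨r 0, 0, rfl⟩
    obtain ⟨k0, hk0⟩ := Nat.sInf_mem hne
    exact ⟨k0, fun n => by rw [hk0]; exact Nat.sInf_le ⟨n, rfl⟩⟩
  set k := k0 + 1 with hk
  have hrk : r k = r k0 := le_antisymm (hmono k0) (hk0 _)
  have hrk1 : r (k + 1) = r k := le_antisymm (hmono k) (by rw [hrk]; exact hk0 _)
  have hinj : Function.Injective (q k) := KStab.surj_inj (q k) (hqsurj k) hrk1.symm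
  have hstep : (iterateHom φ (k + 1)).ker = (iterateHom φ k).ker := by
    refine le_antisymm ?_ ?_
    · intro x hx
      have hx' : φ (iterateHom φ k x) = 1 := hx
      have h1 : q k ⟨iterateHom φ k x, ⟨x, rfl⟩⟩ = 1 := Subtype.ext hx'
      have h2 : (⟨iterateHom φ k x, ⟨x, rfl⟩⟩ : ↥(iterateHom φ k).range) = 1 := by
        apply hinj; rw [h1, map_one]
      exact congrArg Subtype.val h2
    · intro x hx
      have hx' : iterateHom φ k x = 1 := hx
      show φ (iterateHom φ k x) = 1
      rw [hx', map_one]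
  refine ⟨k, Nat.succ_pos _, ?_⟩
  intro n hn
  obtain ⟨m, rfl⟩ : ∃ m, n = k + m := ⟨n - k, by omega⟩
  clear hn
  induction m with
  | zero => rfl
  | succ m ih =>
    refine le_antisymm ?_ ?_
    · intro x hx
      have hx' : iterateHom φ ((k + 1) + m) x = 1 := by
        rw [show (k + 1) + m = k + (m + 1) by omega]; exact hx
      rw [iterateHom_add] at hx'
      have h1 : iterateHom φ m x ∈ (iterateHom φ (k + 1)).ker := hx'
      rw [hstep] at h1
      have h2 : x ∈ (iterateHom φ (k + m)).ker := by
        show iterateHom φ (k + m) x = 1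
        rw [iterateHom_add]
        exact h1
      rw [← ih]
      exact h2
    · intro x hx
      have hx' : iterateHom φ k x = 1 := hx
      show iterateHom φ (k + (m + 1)) x = 1
      rw [show k + (m + 1) = (m + 1) + k by omega, iterateHom_add]
      show iterateHom φ (m + 1) (iterateHom φ k x) = 1
      rw [hx', map_one]
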